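/- Let [A] be an interval matrix with midpoint Ac = (1/2)(A̲+Ā), and suppose Ac is an M-matrix. Then [A] is strongly principally nondegenerate if and only if every A ∈ [A] is an H-matrix. -/

import Mathlib

open Matrix

/-- Spectral radius of a real square matrix (via its complex spectrum). -/
noncomputable def specRad {n : ℕ} (A : Matrix (Fin n) (Fin n) ℝ) : ℝ :=
  (spectralRadius ℂ (A.map (algebraMap ℝ ℂ))).toReal

/-- `A` is an M-matrix: `A = s•I - N` with `N ≥ 0` and `s > ρ(N)`. -/
def IsMMatrix {n : ℕ} (A : Matrix (Fin n) (Fin n) ℝ) : Prop :=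
  ∃ (s : ℝ) (N : Matrix (Fin n) (Fin n) ℝ),
    (∀ i j, 0 ≤ N i j) ∧ A = s • (1 : Matrix (Fin n) (Fin n) ℝ) - N ∧ specRad N < s

/-- `A` is an M0-matrix: `A = s•I - N` with `N ≥ 0` and `s ≥ ρ(N)`. -/
def IsM0Matrix {n : ℕ} (A : Matrix (Fin n) (Fin n) ℝ) : Prop :=
  ∃ (s : ℝ) (N : Matrix (Fin n) (Fin n) ℝ),
    (∀ i j, 0 ≤ N i j) ∧ A = s • (1 : Matrix (Fin n) (Fin n) ℝ) - N ∧ specRad N ≤ s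

/-- Comparison matrix. -/
def compMatrix {n : ℕ} (A : Matrix (Fin n) (Fin n) ℝ) : Matrix (Fin n) (Fin n) ℝ :=
  fun i j => if i = j then |A i i| else -|A i j|

def IsHMatrix {n : ℕ} (A : Matrix (Fin n) (Fin n) ℝ) : Prop :=
  IsMMatrix (compMatrix A)

def IsSMatrix {n : ℕ} (A : Matrix (Fin n) (Fin n) ℝ) : Prop :=
  ∃ x : Fin n → ℝ, (∀ i, 0 < x i) ∧ (∀ i, 0 < A.mulVec x i)

def Copositive {n : ℕ} (A : Matrix (Fin n) (Fin n) ℝ) : Prop :=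
  ∀ x : Fin n → ℝ, (∀ i, 0 ≤ x i) → 0 ≤ x ⬝ᵥ A.mulVec x

def StrictlyCopositive {n : ℕ} (A : Matrix (Fin n) (Fin n) ℝ) : Prop :=
  ∀ x : Fin n → ℝ, (∀ i, 0 ≤ x i) → x ≠ 0 → 0 < x ⬝ᵥ A.mulVec x

def Semimonotone {n : ℕ} (A : Matrix (Fin n) (Fin n) ℝ) : Prop :=
  ∀ I : Finset (Fin n), I.Nonempty →
    ¬ ∃ x : ↥I → ℝ,
      (∀ i, (A.submatrix ((↑) : ↥I → Fin n) ((↑) : ↥I → Fin n)).mulVec x i < 0) ∧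
      (∀ i, 0 ≤ x i)

def PrincipallyNondegenerate {n : ℕ} (A : Matrix (Fin n) (Fin n) ℝ) : Prop :=
  ∀ I : Finset (Fin n), I.Nonempty →
    (A.submatrix ((↑) : ↥I → Fin n) ((↑) : ↥I → Fin n)).det ≠ 0

/-- A nonnegative matrix is irreducible if `(I + A)^(n-1) > 0` entrywise. -/
def IrreducibleMat {n : ℕ} (A : Matrix (Fin n) (Fin n) ℝ) : Prop :=
  ∀ i j, 0 < ((1 + A) ^ (n - 1)) i j

/-- The block matrix `[[A_II, -A_IJ], [-A_JI, A_JJ]]`. -/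
def csBlock {n : ℕ} (A : Matrix (Fin n) (Fin n) ℝ) (I J : Finset (Fin n)) :
    Matrix (↥I ⊕ ↥J) (↥I ⊕ ↥J) ℝ :=
  Matrix.fromBlocks
    (A.submatrix ((↑) : ↥I → Fin n) ((↑) : ↥I → Fin n))
    (-(A.submatrix ((↑) : ↥I → Fin n) ((↑) : ↥J → Fin n)))
    (-(A.submatrix ((↑) : ↥J → Fin n) ((↑) : ↥I → Fin n)))
    (A.submatrix ((↑) : ↥J → Fin n) ((↑) : ↥J → Fin n))

def ColumnSufficient {n : ℕ} (A : Matrix (Fin n) (Fin n) ℝ) : Prop :=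
  ∀ I J : Finset (Fin n), Disjoint I J → (I ∪ J).Nonempty →
    ¬ ∃ x : (↥I ⊕ ↥J) → ℝ,
      (∀ k, (csBlock A I J).mulVec x k ≤ 0) ∧
      (csBlock A I J).mulVec x ≠ 0 ∧
      (∀ k, 0 < x k)

def IsR0Matrix {n : ℕ} (A : Matrix (Fin n) (Fin n) ℝ) : Prop :=
  ∀ I : Finset (Fin n), I.Nonempty →
    ¬ ∃ x : ↥I → ℝ,
      (∀ i, (A.submatrix ((↑) : ↥I → Fin n) ((↑) : ↥I → Fin n)).mulVec x i = 0) ∧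
      (∀ j : ↥(Iᶜ : Finset (Fin n)),
        0 ≤ (A.submatrix ((↑) : ↥(Iᶜ : Finset (Fin n)) → Fin n) ((↑) : ↥I → Fin n)).mulVec x j) ∧
      (∀ i, 0 < x i)

def IsRMatrix {n : ℕ} (A : Matrix (Fin n) (Fin n) ℝ) : Prop :=
  ∀ I : Finset (Fin n), I.Nonempty →
    ¬ ∃ (x : ↥I → ℝ) (t : ℝ),
      (∀ i, (A.submatrix ((↑) : ↥I → Fin n) ((↑) : ↥I → Fin n)).mulVec x i + t = 0) ∧
      (∀ j : ↥(Iᶜ : Finset (Fin n)),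
        0 ≤ (A.submatrix ((↑) : ↥(Iᶜ : Finset (Fin n)) → Fin n) ((↑) : ↥I → Fin n)).mulVec x j + t) ∧
      (∀ i, 0 < x i) ∧ 0 ≤ t

def PosDefMat {n : ℕ} (A : Matrix (Fin n) (Fin n) ℝ) : Prop :=
  ∀ x : Fin n → ℝ, x ≠ 0 → 0 < x ⬝ᵥ A.mulVec x

def PosSemidefMat {n : ℕ} (A : Matrix (Fin n) (Fin n) ℝ) : Prop :=
  ∀ x : Fin n → ℝ, 0 ≤ x ⬝ᵥ A.mulVec x

/-- Membership of `A` in the interval matrix `[Al, Au]`. -/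
def memInterval {n : ℕ} (Al Au A : Matrix (Fin n) (Fin n) ℝ) : Prop :=
  ∀ i j, Al i j ≤ A i j ∧ A i j ≤ Au i j

/-- The mixed block matrix `[[Al_II, -Au_IJ], [-Au_JI, Al_JJ]]`. -/
def csMixedBlock {n : ℕ} (Al Au : Matrix (Fin n) (Fin n) ℝ) (I J : Finset (Fin n)) :
    Matrix (↥I ⊕ ↥J) (↥I ⊕ ↥J) ℝ :=
  Matrix.fromBlocks
    (Al.submatrix ((↑) : ↥I → Fin n) ((↑) : ↥I → Fin n))
    (-(Au.submatrix ((↑) : ↥I → Fin n) ((↑) : ↥J → Fin n)))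
    (-(Au.submatrix ((↑) : ↥J → Fin n) ((↑) : ↥I → Fin n)))
    (Al.submatrix ((↑) : ↥J → Fin n) ((↑) : ↥J → Fin n))

open Matrix Filter Finset

attribute [local instance] Matrix.linftyOpNormedRing Matrix.linftyOpNormedAlgebra

lemma specRad_nonneg {n : ℕ} (N : Matrix (Fin n) (Fin n) ℝ) : 0 ≤ specRad N :=
  ENNReal.toReal_nonneg

lemma specRad_lt_of_dom {n : ℕ} (N : Matrix (Fin n) (Fin n) ℝ) (s : ℝ)
    (hN : ∀ i j, 0 ≤ N i j) (hs : 0 < s) (u : Fin n → ℝ) (hu : ∀ i, 0 < u i)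
    (hdom : ∀ i, N.mulVec u i < s * u i) : specRad N < s := by
  rcases Nat.eq_zero_or_pos n with hn | hn
  · subst hn
    have hsub : Subsingleton (Matrix (Fin 0) (Fin 0) ℂ) := by
      constructor; intro a b; ext i j; exact i.elim0
    have hemp : spectrum ℂ (N.map (algebraMap ℝ ℂ)) = ∅ := by
      ext z
      simp only [Set.mem_empty_iff_false, iff_false]
      rw [spectrum.mem_iff, not_not]
      exact isUnit_of_subsingleton _
    unfold specRad spectralRadius
    rw [hemp]
    simpa using hs
  · have hne : (Finset.univ : Finset (Fin n)).Nonempty := ⟨⟨0, hn⟩, Finset.mem_univ _⟩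
    set δ : ℝ := Finset.univ.inf' hne (fun i => s * u i - N.mulVec u i) with hδ
    have hδ0 : 0 < δ := by
      rw [hδ]
      apply Finset.lt_inf'_iff hne |>.2
      intro i _
      exact sub_pos.mpr (hdom i)
    set U : ℝ := Finset.univ.sup' hne u with hU
    have hU0 : 0 < U := lt_of_lt_of_le (hu (hne.choose)) (Finset.le_sup' _ (mem_univ _))
    set c : ℝ := max (s - δ / U) 0 with hc
    have hcs : c < s := by
      rw [hc]
      apply max_lt _ hs
      have : 0 < δ / U := div_pos hδ0 hU0
      linarith
    -- bound all spectrum elements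
    have key : ∀ z ∈ spectrum ℂ (N.map (algebraMap ℝ ℂ)), (‖z‖₊ : ENNReal) ≤ ENNReal.ofReal c := by
      intro z hz
      rw [spectrum.mem_iff] at hz
      rw [Matrix.isUnit_iff_isUnit_det, isUnit_iff_ne_zero, not_not] at hz
      obtain ⟨x, hx0, hx⟩ := (Matrix.exists_mulVec_eq_zero_iff).2 hz
      have heig : ∀ i, (N.map (algebraMap ℝ ℂ)).mulVec x i = z * x i := by
        have h1 : (algebraMap ℂ (Matrix (Fin n) (Fin n) ℂ)) z = z • 1 :=
          Algebra.algebraMap_eq_smul_one z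
        rw [h1, Matrix.sub_mulVec, Matrix.smul_mulVec, Matrix.one_mulVec,
          sub_eq_zero] at hx
        intro i
        rw [← hx]
        simp
      -- pick argmax of ‖x i‖/u i
      obtain ⟨i, _, hi⟩ := Finset.exists_max_image Finset.univ (fun j => ‖x j‖ / u j) hne
      have hxi : 0 < ‖x i‖ := by
        by_contra hcon
        push_neg at hcon
        have hxi0 : ‖x i‖ = 0 := le_antisymm hcon (norm_nonneg _)
        apply hx0
        funext j
        have h1 := hi j (mem_univ j)
        rw [hxi0, zero_div] at h1
        have h2 : ‖x j‖ ≤ 0 := by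
          have h3 := mul_le_mul_of_nonneg_right h1 (le_of_lt (hu j))
          rwa [div_mul_cancel₀ _ (ne_of_gt (hu j)), zero_mul] at h3
        simpa using le_antisymm h2 (norm_nonneg _)
      have hbnd : ∀ j, ‖x j‖ ≤ ‖x i‖ / u i * u j := by
        intro j
        have := hi j (mem_univ j)
        rw [div_le_div_iff₀ (hu j) (hu i)] at this
        rw [div_mul_eq_mul_div, le_div_iff₀ (hu i)]
        linarith
      have hz1 : ‖z‖ * ‖x i‖ ≤ ‖x i‖ / u i * (N.mulVec u i) := by
        have h2 : ‖z * x i‖ = ‖z‖ * ‖x i‖ := norm_mul _ _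
        rw [← h2, ← heig i]
        calc ‖(N.map (algebraMap ℝ ℂ)).mulVec x i‖
            = ‖∑ j, ((N i j : ℝ) : ℂ) * x j‖ := by
              simp [Matrix.mulVec, dotProduct, Matrix.map_apply]
          _ ≤ ∑ j, ‖((N i j : ℝ) : ℂ) * x j‖ := norm_sum_le _ _
          _ ≤ ∑ j, N i j * (‖x i‖ / u i * u j) := by
              apply Finset.sum_le_sum
              intro j _
              rw [norm_mul, Complex.norm_real, Real.norm_eq_abs, abs_of_nonneg (hN i j)]
              exact mul_le_mul_of_nonneg_left (hbnd j) (hN i j)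
          _ = ‖x i‖ / u i * (N.mulVec u i) := by
              rw [Matrix.mulVec, dotProduct, Finset.mul_sum]
              congr 1; funext j; ring
      have hNu : N.mulVec u i ≤ s * u i - δ := by
        have : δ ≤ s * u i - N.mulVec u i := Finset.inf'_le _ (mem_univ i)
        linarith
      have hzc : ‖z‖ ≤ c := by
        have h3 : ‖z‖ * ‖x i‖ ≤ ‖x i‖ / u i * (s * u i - δ) := by
          calc ‖z‖ * ‖x i‖ ≤ ‖x i‖ / u i * (N.mulVec u i) := hz1
            _ ≤ ‖x i‖ / u i * (s * u i - δ) := by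
                exact mul_le_mul_of_nonneg_left hNu
                  (div_nonneg (norm_nonneg _) (le_of_lt (hu i)))
        have hui := (hu i).ne'
        have h4 : ‖x i‖ / u i * (s * u i - δ) = ‖x i‖ * (s - δ / u i) := by
          field_simp
        rw [h4] at h3
        have h5 : ‖z‖ ≤ s - δ / u i := by
          have := (mul_le_mul_iff_of_pos_right hxi).mp (by linarith [h3] : ‖z‖ * ‖x i‖ ≤ (s - δ / u i) * ‖x i‖)
          exact this
        have h6 : δ / U ≤ δ / u i :=
          div_le_div_of_nonneg_left (le_of_lt hδ0) (hu i) (Finset.le_sup' _ (mem_univ i))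
        calc ‖z‖ ≤ s - δ / u i := h5
          _ ≤ s - δ / U := by linarith
          _ ≤ c := le_max_left _ _
      calc (‖z‖₊ : ENNReal) = ENNReal.ofReal ‖z‖ := (ofReal_norm z).symm
        _ ≤ ENNReal.ofReal c := ENNReal.ofReal_le_ofReal hzc
    have hsr : spectralRadius ℂ (N.map (algebraMap ℝ ℂ)) ≤ ENNReal.ofReal c := by
      unfold spectralRadius
      exact iSup₂_le key
    have : specRad N ≤ c := by
      unfold specRad
      exact ENNReal.toReal_le_of_le_ofReal (le_max_right _ _) hsr
    linarith

lemma entry_pow_nonneg {n : ℕ} (N : Matrix (Fin n) (Fin n) ℝ) (hN : ∀ i j, 0 ≤ N i j) :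
    ∀ k i j, 0 ≤ (N ^ k) i j := by
  intro k
  induction k with
  | zero =>
    intro i j
    simp only [pow_zero]
    by_cases h : i = j <;> simp [Matrix.one_apply, h]
  | succ m ih =>
    intro i j
    rw [pow_succ, Matrix.mul_apply]
    exact Finset.sum_nonneg fun l _ => mul_nonneg (ih i l) (hN l j)

lemma exists_dom_of_specRad_lt {n : ℕ} (N : Matrix (Fin n) (Fin n) ℝ) (s : ℝ)
    (hN : ∀ i j, 0 ≤ N i j) (h : specRad N < s) :
    ∃ u : Fin n → ℝ, (∀ i, 0 < u i) ∧ ∀ i, N.mulVec u i < s * u i := by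
  have hs : 0 < s := lt_of_le_of_lt (specRad_nonneg N) h
  rcases Nat.eq_zero_or_pos n with hn | hn
  · subst hn
    exact ⟨fun _ => 1, fun i => i.elim0, fun i => i.elim0⟩
  haveI : Nonempty (Fin n) := ⟨⟨0, hn⟩⟩
  set M : Matrix (Fin n) (Fin n) ℂ := N.map (algebraMap ℝ ℂ) with hM
  have hρtop : spectralRadius ℂ M ≠ ⊤ :=
    ne_top_of_le_ne_top ENNReal.coe_ne_top (spectrum.spectralRadius_le_nnnorm (𝕜 := ℂ) (a := M))
  have hρ : spectralRadius ℂ M < ENNReal.ofReal s := by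
    rw [← ENNReal.ofReal_toReal hρtop]
    exact ENNReal.ofReal_lt_ofReal_iff hs |>.2 h
  -- Gelfand
  have hgel := spectrum.pow_nnnorm_pow_one_div_tendsto_nhds_spectralRadius M
  have hev : ∀ᶠ k : ℕ in atTop, (‖M ^ k‖₊ : ENNReal) ^ (1 / (k:ℕ) : ℝ) < ENNReal.ofReal s :=
    hgel.eventually_lt_const hρ
  obtain ⟨k, hk1, hkb⟩ := (hev.and (Filter.eventually_ge_atTop 1)).exists
  set k' := hk1
  -- from root bound to power bound
  have hkpow : (‖M ^ k‖₊ : ENNReal) < (ENNReal.ofReal s) ^ (k : ℝ) := by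
    have h1 : ((‖M ^ k‖₊ : ENNReal) ^ (1 / (k:ℕ) : ℝ)) ^ (k : ℝ) <
        (ENNReal.ofReal s) ^ (k : ℝ) := by
      exact ENNReal.rpow_lt_rpow hk1 (by exact_mod_cast hkb)
    rwa [← ENNReal.rpow_mul, one_div,
      inv_mul_cancel₀ ((Nat.cast_ne_zero (R := ℝ)).mpr (by omega)), ENNReal.rpow_one] at h1
  have hnorm : ‖M ^ k‖ < s ^ k := by
    have h2 : (ENNReal.ofReal s) ^ (k : ℝ) = ENNReal.ofReal (s ^ k) := by
      rw [ENNReal.ofReal_rpow_of_pos hs, Real.rpow_natCast]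
    rw [h2, ← enorm_eq_nnnorm, ← ofReal_norm] at hkpow
    exact (ENNReal.ofReal_lt_ofReal_iff (by positivity)).1 hkpow
  -- row sums of N^k are < s^k
  have hMk : M ^ k = (N ^ k).map (algebraMap ℝ ℂ) := by
    rw [hM]
    have := map_pow ((algebraMap ℝ ℂ).mapMatrix) N k
    simp only [RingHom.mapMatrix_apply] at this
    exact this.symm
  have hrow : ∀ i, (N ^ k).mulVec (fun _ => 1) i < s ^ k := by
    intro i
    have h3 : (∑ j, ‖(M ^ k) i j‖₊) ≤ ‖M ^ k‖₊ := by
      rw [Matrix.linfty_opNNNorm_def]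
      exact Finset.le_sup (f := fun i => ∑ j, ‖(M ^ k) i j‖₊) (Finset.mem_univ i)
    have h4 : (∑ j, ‖(M ^ k) i j‖) ≤ ‖M ^ k‖ := by
      have := h3
      rw [← NNReal.coe_le_coe] at this
      push_cast at this
      simpa using this
    have h5 : ∀ j, ‖(M ^ k) i j‖ = (N ^ k) i j := by
      intro j
      rw [hMk, Matrix.map_apply]
      simp only [Complex.coe_algebraMap]
      rw [Complex.norm_real, Real.norm_eq_abs, abs_of_nonneg (entry_pow_nonneg N hN k i j)]
    calc (N ^ k).mulVec (fun _ => 1) i = ∑ j, (N ^ k) i j := by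
          simp [Matrix.mulVec, dotProduct]
      _ = ∑ j, ‖(M ^ k) i j‖ := by
          exact Finset.sum_congr rfl fun j _ => (h5 j).symm
      _ ≤ ‖M ^ k‖ := h4
      _ < s ^ k := hnorm
  -- build the vector u
  set u : Fin n → ℝ := fun i => ∑ j ∈ Finset.range k, s ^ (k - 1 - j) * (N ^ j).mulVec (fun _ => 1) i with hu
  have hupos : ∀ i, 0 < u i := by
    intro i
    rw [hu]
    apply Finset.sum_pos'
    · intro j _
      apply mul_nonneg (by positivity)
      rw [Matrix.mulVec, dotProduct]
      exact Finset.sum_nonneg fun l _ => by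
        simpa using entry_pow_nonneg N hN j i l
    · refine ⟨0, Finset.mem_range.2 (by omega), ?_⟩
      simp only [pow_zero, Matrix.one_mulVec]
      positivity
  refine ⟨u, hupos, fun i => ?_⟩
  have gdef : ∀ j, (N ^ j).mulVec (fun _ => (1:ℝ)) i = ∑ l, (N ^ j) i l := by
    intro j
    simp [Matrix.mulVec, dotProduct]
  have hNu : N.mulVec u i = ∑ j ∈ Finset.range k, s ^ (k - 1 - j) * (N ^ (j+1)).mulVec (fun _ => 1) i := by
    rw [Matrix.mulVec, dotProduct]
    calc ∑ l, N i l * u l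
        = ∑ l, ∑ j ∈ Finset.range k, s ^ (k - 1 - j) * (N i l * (N ^ j).mulVec (fun _ => 1) l) := by
          apply Finset.sum_congr rfl
          intro l _
          rw [hu]
          rw [Finset.mul_sum]
          apply Finset.sum_congr rfl
          intro j _
          ring
      _ = ∑ j ∈ Finset.range k, ∑ l, s ^ (k - 1 - j) * (N i l * (N ^ j).mulVec (fun _ => 1) l) :=
          Finset.sum_comm
      _ = ∑ j ∈ Finset.range k, s ^ (k - 1 - j) * (N ^ (j+1)).mulVec (fun _ => 1) i := by
          apply Finset.sum_congr rfl
          intro j _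
          rw [← Finset.mul_sum]
          congr 1
          have h12 : (N ^ (j+1)).mulVec (fun _ => (1:ℝ)) = N.mulVec ((N ^ j).mulVec (fun _ => 1)) := by
            rw [Matrix.mulVec_mulVec, ← pow_succ']
          rw [h12, Matrix.mulVec, dotProduct]
  have htel : s * u i - N.mulVec u i = s ^ k - (N ^ k).mulVec (fun _ => 1) i := by
    rw [hNu, hu, Finset.mul_sum]
    have h9 : (∑ j ∈ Finset.range k, s * (s ^ (k - 1 - j) * (N ^ j).mulVec (fun _ => 1) i))
        = ∑ j ∈ Finset.range k, s ^ (k - j) * (N ^ j).mulVec (fun _ => 1) i := by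
      apply Finset.sum_congr rfl
      intro j hj
      rw [Finset.mem_range] at hj
      rw [← mul_assoc, ← pow_succ']
      congr 2
      omega
    have h10 : (∑ j ∈ Finset.range k, s ^ (k - 1 - j) * (N ^ (j+1)).mulVec (fun _ => 1) i)
        = ∑ j ∈ Finset.range k, s ^ (k - (j+1)) * (N ^ (j+1)).mulVec (fun _ => 1) i := by
      apply Finset.sum_congr rfl
      intro j hj
      rw [Finset.mem_range] at hj
      congr 2
      omega
    rw [h9, h10, ← Finset.sum_sub_distrib,
      Finset.sum_range_sub' (fun j => s ^ (k - j) * (N ^ j).mulVec (fun _ => 1) i) k]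
    simp [Matrix.one_mulVec]
  have := hrow i
  linarith [htel]

/-- Generalized strict diagonal dominance implies nonsingularity. -/
lemma det_ne_zero_of_dom {ι : Type*} [Fintype ι] [DecidableEq ι]
    (D : Matrix ι ι ℝ) (u : ι → ℝ) (hu : ∀ i, 0 < u i)
    (hdom : ∀ i, ∑ j ∈ Finset.univ.erase i, |D i j| * u j < |D i i| * u i) :
    D.det ≠ 0 := by
  intro hdet
  obtain ⟨x, hx0, hx⟩ := (Matrix.exists_mulVec_eq_zero_iff).2 hdet
  have hne : (Finset.univ : Finset ι).Nonempty := by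
    rcases Function.ne_iff.mp hx0 with ⟨j, _⟩
    exact ⟨j, Finset.mem_univ j⟩
  obtain ⟨i, _, hi⟩ := Finset.exists_max_image Finset.univ (fun j => |x j| / u j) hne
  have hxi : 0 < |x i| := by
    by_contra hcon
    push_neg at hcon
    have hxi0 : |x i| = 0 := le_antisymm hcon (abs_nonneg _)
    apply hx0
    funext j
    have h1 := hi j (Finset.mem_univ j)
    rw [hxi0, zero_div] at h1
    have h2 : |x j| ≤ 0 := by
      have h3 := mul_le_mul_of_nonneg_right h1 (le_of_lt (hu j))
      rwa [div_mul_cancel₀ _ (ne_of_gt (hu j)), zero_mul] at h3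
    simpa using le_antisymm h2 (abs_nonneg _)
  have hbnd : ∀ j, |x j| ≤ |x i| / u i * u j := by
    intro j
    have h1 := hi j (Finset.mem_univ j)
    rw [div_le_div_iff₀ (hu j) (hu i)] at h1
    rw [div_mul_eq_mul_div, le_div_iff₀ (hu i)]
    linarith
  have hxiu : |x i| = |x i| / u i * u i :=
    (div_mul_cancel₀ _ (ne_of_gt (hu i))).symm
  have heq : D i i * x i = -∑ j ∈ Finset.univ.erase i, D i j * x j := by
    have h4 : ∑ j, D i j * x j = 0 := by
      have := congrFun hx i
      simpa [Matrix.mulVec, dotProduct] using this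
    rw [← Finset.add_sum_erase _ _ (Finset.mem_univ i)] at h4
    linarith
  have habs : |D i i| * |x i| ≤ ∑ j ∈ Finset.univ.erase i, |D i j| * |x j| := by
    rw [← abs_mul, heq, abs_neg]
    calc |∑ j ∈ Finset.univ.erase i, D i j * x j|
        ≤ ∑ j ∈ Finset.univ.erase i, |D i j * x j| := Finset.abs_sum_le_sum_abs _ _
      _ = ∑ j ∈ Finset.univ.erase i, |D i j| * |x j| := by
          exact Finset.sum_congr rfl fun j _ => abs_mul _ _
  have hlt : ∑ j ∈ Finset.univ.erase i, |D i j| * |x j|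
      ≤ |x i| / u i * ∑ j ∈ Finset.univ.erase i, |D i j| * u j := by
    rw [Finset.mul_sum]
    apply Finset.sum_le_sum
    intro j _
    calc |D i j| * |x j| ≤ |D i j| * (|x i| / u i * u j) :=
          mul_le_mul_of_nonneg_left (hbnd j) (abs_nonneg _)
      _ = |x i| / u i * (|D i j| * u j) := by ring
  have hm : 0 < |x i| / u i := div_pos hxi (hu i)
  have hfin : |x i| / u i * ∑ j ∈ Finset.univ.erase i, |D i j| * u j
      < |x i| / u i * (|D i i| * u i) := by
    exact mul_lt_mul_of_pos_left (hdom i) hm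
  have : |D i i| * |x i| < |D i i| * |x i| := by
    calc |D i i| * |x i| ≤ ∑ j ∈ Finset.univ.erase i, |D i j| * |x j| := habs
      _ ≤ |x i| / u i * ∑ j ∈ Finset.univ.erase i, |D i j| * u j := hlt
      _ < |x i| / u i * (|D i i| * u i) := hfin
      _ = |D i i| * (|x i| / u i * u i) := by ring
      _ = |D i i| * |x i| := by rw [← hxiu]
  exact lt_irrefl _ this

/-- A Z-matrix with a positive dominance vector is an M-matrix. -/
lemma isMMatrix_of_dom {n : ℕ} (C : Matrix (Fin n) (Fin n) ℝ)
    (hoff : ∀ i j, i ≠ j → C i j ≤ 0) (u : Fin n → ℝ) (hu : ∀ i, 0 < u i)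
    (hCu : ∀ i, 0 < C.mulVec u i) : IsMMatrix C := by
  set s : ℝ := 1 + ∑ i, max 0 (C i i) with hs
  have hs0 : 0 < s := by
    rw [hs]
    have : (0:ℝ) ≤ ∑ i, max 0 (C i i) :=
      Finset.sum_nonneg fun i _ => le_max_left _ _
    linarith
  set N : Matrix (Fin n) (Fin n) ℝ := s • (1 : Matrix (Fin n) (Fin n) ℝ) - C with hN
  have hNnn : ∀ i j, 0 ≤ N i j := by
    intro i j
    rw [hN]
    by_cases h : i = j
    · subst h
      simp only [Matrix.sub_apply, Matrix.smul_apply, Matrix.one_apply_eq, smul_eq_mul, mul_one]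
      have h1 : C i i ≤ max 0 (C i i) := le_max_right _ _
      have h2 : max 0 (C i i) ≤ ∑ l, max 0 (C l l) :=
        Finset.single_le_sum (f := fun l => max 0 (C l l))
          (fun l _ => le_max_left _ _) (Finset.mem_univ i)
      rw [hs]
      linarith
    · simp only [Matrix.sub_apply, Matrix.smul_apply, Matrix.one_apply_ne h, smul_eq_mul, mul_zero]
      linarith [hoff i j h]
  have hdom : ∀ i, N.mulVec u i < s * u i := by
    intro i
    have h1 : N.mulVec u i = s * u i - C.mulVec u i := by
      rw [hN, Matrix.sub_mulVec, Matrix.smul_mulVec, Matrix.one_mulVec]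
      simp
    rw [h1]
    linarith [hCu i]
  exact ⟨s, N, hNnn, (sub_sub_cancel _ _).symm, specRad_lt_of_dom N s hNnn hs0 u hu hdom⟩

/-- From an M-matrix witness, get a dominance vector. -/
lemma dom_of_isMMatrix {n : ℕ} (C : Matrix (Fin n) (Fin n) ℝ) (h : IsMMatrix C) :
    ∃ u : Fin n → ℝ, (∀ i, 0 < u i) ∧ ∀ i, 0 < C.mulVec u i := by
  obtain ⟨s, N, hNnn, hCeq, hlt⟩ := h
  obtain ⟨u, hu, hdom⟩ := exists_dom_of_specRad_lt N s hNnn hlt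
  refine ⟨u, hu, fun i => ?_⟩
  have h1 : C.mulVec u i = s * u i - N.mulVec u i := by
    rw [hCeq, Matrix.sub_mulVec, Matrix.smul_mulVec, Matrix.one_mulVec]
    simp
  rw [h1]
  linarith [hdom i]

lemma mulVec_mono {n : ℕ} (P Q : Matrix (Fin n) (Fin n) ℝ) (h : ∀ i j, P i j ≤ Q i j)
    (w : Fin n → ℝ) (hw : ∀ j, 0 ≤ w j) : ∀ i, P.mulVec w i ≤ Q.mulVec w i := by
  intro i
  simp only [Matrix.mulVec, dotProduct]
  exact Finset.sum_le_sum fun j _ => mul_le_mul_of_nonneg_right (h i j) (hw j)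

lemma principallyNondegenerate_of_isHMatrix {n : ℕ} (A : Matrix (Fin n) (Fin n) ℝ)
    (h : IsHMatrix A) : PrincipallyNondegenerate A := by
  obtain ⟨u, hu, hCu⟩ := dom_of_isMMatrix _ h
  have hdom : ∀ i, ∑ j ∈ Finset.univ.erase i, |A i j| * u j < |A i i| * u i := by
    intro i
    have h1 := hCu i
    rw [Matrix.mulVec, dotProduct,
      ← Finset.add_sum_erase _ _ (Finset.mem_univ i)] at h1
    have h2 : ∀ j ∈ Finset.univ.erase i, compMatrix A i j * u j = -(|A i j| * u j) := by
      intro j hj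
      have hij : ¬ (i = j) := fun hh => (Finset.ne_of_mem_erase hj) hh.symm
      simp [compMatrix, hij]
    rw [Finset.sum_congr rfl h2, Finset.sum_neg_distrib] at h1
    have h3 : compMatrix A i i = |A i i| := by simp [compMatrix]
    rw [h3] at h1
    linarith
  intro I hI
  apply det_ne_zero_of_dom _ (fun j : ↥I => u ↑j) (fun j => hu ↑j)
  intro i
  have key : ∑ j ∈ Finset.univ.erase i, |A.submatrix ((↑) : ↥I → Fin n) (↑) i j| * u ↑j
      ≤ ∑ y ∈ Finset.univ.erase (↑i : Fin n), |A ↑i y| * u y := by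
    have himg : (Finset.univ.erase i).image ((↑) : ↥I → Fin n) ⊆ Finset.univ.erase ↑i := by
      intro y hy
      rw [Finset.mem_image] at hy
      obtain ⟨j, hj, rfl⟩ := hy
      rw [Finset.mem_erase]
      exact ⟨fun hc => (Finset.ne_of_mem_erase hj) (Subtype.coe_injective hc),
        Finset.mem_univ _⟩
    calc ∑ j ∈ Finset.univ.erase i, |A.submatrix ((↑) : ↥I → Fin n) (↑) i j| * u ↑j
        = ∑ y ∈ (Finset.univ.erase i).image ((↑) : ↥I → Fin n), |A ↑i y| * u y := by
          rw [Finset.sum_image (fun a _ b _ hab => Subtype.coe_injective hab)]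
          rfl
      _ ≤ ∑ y ∈ Finset.univ.erase (↑i : Fin n), |A ↑i y| * u y := by
          apply Finset.sum_le_sum_of_subset_of_nonneg himg
          intro y _ _
          exact mul_nonneg (abs_nonneg _) (le_of_lt (hu y))
  calc ∑ j ∈ Finset.univ.erase i, |A.submatrix ((↑) : ↥I → Fin n) (↑) i j| * u ↑j
      ≤ ∑ y ∈ Finset.univ.erase (↑i : Fin n), |A ↑i y| * u y := key
    _ < |A ↑i ↑i| * u ↑i := hdom ↑i
    _ = |A.submatrix ((↑) : ↥I → Fin n) (↑) i i| * u ↑i := rfl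

/-- The critical "corner" matrix of the interval. -/
def Bmat {n : ℕ} (Al : Matrix (Fin n) (Fin n) ℝ) : Matrix (Fin n) (Fin n) ℝ :=
  fun i j => if i = j then max 0 (Al i i) else Al i j


set_option maxHeartbeats 1000000 in
lemma mainB : ∀ (n : ℕ) (Al Au : Matrix (Fin n) (Fin n) ℝ),
    (∀ i j, Al i j ≤ Au i j) →
    (∀ i j, i ≠ j → Al i j + Au i j ≤ 0) →
    (∃ u : Fin n → ℝ, (∀ i, 0 < u i) ∧
      ∀ i, 0 < (((1:ℝ)/2) • (Al + Au)).mulVec u i) →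
    (∀ A, memInterval Al Au A → PrincipallyNondegenerate A) →
    ∃ w : Fin n → ℝ, (∀ i, 0 < w i) ∧ ∀ i, 0 < (Bmat Al).mulVec w i := by
  intro n
  induction n using Nat.strong_induction_on with
  | _ n IH =>
  intro Al Au hle hZ hdom hreg
  rcases Nat.eq_zero_or_pos n with hn | hn
  · subst hn
    exact ⟨fun _ => 1, fun i => i.elim0, fun i => i.elim0⟩
  haveI : Nonempty (Fin n) := ⟨⟨0, hn⟩⟩
  classical
  obtain ⟨u0, hu0, hAcu0⟩ := hdom
  set Ac : Matrix (Fin n) (Fin n) ℝ := ((1:ℝ)/2) • (Al + Au) with hAcdef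
  set B : Matrix (Fin n) (Fin n) ℝ := Bmat Al with hBdef
  have hAcApp : ∀ i j, Ac i j = (1/2) * (Al i j + Au i j) := by
    intro i j
    rw [hAcdef]
    simp
  have hAcOff : ∀ i j, i ≠ j → Ac i j ≤ 0 := by
    intro i j hij
    rw [hAcApp]
    linarith [hZ i j hij]
  have hAlAc : ∀ i j, Al i j ≤ Ac i j := by
    intro i j
    rw [hAcApp]
    linarith [hle i j]
  have hAcAu : ∀ i j, Ac i j ≤ Au i j := by
    intro i j
    rw [hAcApp]
    linarith [hle i j]
  have hAcd : ∀ i, 0 < Ac i i := by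
    intro i
    have h1 := hAcu0 i
    have h2 : Ac.mulVec u0 i ≤ Ac i i * u0 i := by
      rw [Matrix.mulVec, dotProduct,
        ← Finset.add_sum_erase _ _ (Finset.mem_univ i)]
      have h3 : ∑ j ∈ Finset.univ.erase i, Ac i j * u0 j ≤ 0 :=
        Finset.sum_nonpos fun j hj =>
          mul_nonpos_of_nonpos_of_nonneg
            (hAcOff i j (Finset.ne_of_mem_erase hj).symm)
            (le_of_lt (hu0 j))
      linarith
    nlinarith [hu0 i]
  have hBAc : ∀ i j, B i j ≤ Ac i j := by
    intro i j
    by_cases h : i = j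
    · subst h
      rw [hBdef]
      show (if i = i then max 0 (Al i i) else Al i i) ≤ Ac i i
      rw [if_pos rfl]
      exact max_le (le_of_lt (hAcd i)) (hAlAc i i)
    · rw [hBdef]
      show (if i = j then max 0 (Al i i) else Al i j) ≤ Ac i j
      rw [if_neg h]
      exact hAlAc i j
  have hBmem : memInterval Al Au B := by
    intro i j
    by_cases h : i = j
    · subst h
      rw [hBdef]
      constructor
      · show Al i i ≤ (if i = i then max 0 (Al i i) else Al i i)
        rw [if_pos rfl]
        exact le_max_right _ _
      · show (if i = i then max 0 (Al i i) else Al i i) ≤ Au i i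
        rw [if_pos rfl]
        refine max_le ?_ (hle i i)
        linarith [hAcd i, hAcAu i i]
    · rw [hBdef]
      constructor
      · show Al i j ≤ (if i = j then max 0 (Al i i) else Al i j)
        rw [if_neg h]
      · show (if i = j then max 0 (Al i i) else Al i j) ≤ Au i j
        rw [if_neg h]
        exact hle i j
  -- the path from Ac to B
  set CC : ℝ → Matrix (Fin n) (Fin n) ℝ :=
    fun t => fun i j => (1 - t) * Ac i j + t * B i j with hCC
  have hCCmem : ∀ t ∈ Set.Icc (0:ℝ) 1, memInterval Al Au (CC t) := by
    intro t ht i j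
    have h1 := hAlAc i j
    have h2 := hAcAu i j
    have h3 := (hBmem i j).1
    have h4 := (hBmem i j).2
    refine ⟨?_, ?_⟩
    · show Al i j ≤ (1 - t) * Ac i j + t * B i j
      nlinarith [ht.1, ht.2]
    · show (1 - t) * Ac i j + t * B i j ≤ Au i j
      nlinarith [ht.1, ht.2]
  have hCCZ : ∀ t ∈ Set.Icc (0:ℝ) 1, ∀ i j, i ≠ j → CC t i j ≤ 0 := by
    intro t ht i j hij
    have h1 := hAcOff i j hij
    have h2 : B i j ≤ 0 := le_trans (hBAc i j) h1
    show (1 - t) * Ac i j + t * B i j ≤ 0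
    nlinarith [ht.1, ht.2]
  have hBCC : ∀ t ∈ Set.Icc (0:ℝ) 1, ∀ i j, B i j ≤ CC t i j := by
    intro t ht i j
    have h1 := hBAc i j
    show B i j ≤ (1 - t) * Ac i j + t * B i j
    nlinarith [ht.1, ht.2]
  set T : Set ℝ := {t | t ∈ Set.Icc (0:ℝ) 1 ∧
    ∃ u : Fin n → ℝ, (∀ i, 0 < u i) ∧ ∀ i, 0 < (CC t).mulVec u i} with hT
  have h0T : (0:ℝ) ∈ T := by
    refine ⟨⟨le_refl 0, zero_le_one⟩, u0, hu0, fun i => ?_⟩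
    have hCC0 : CC 0 = Ac := by
      funext i j
      show (1 - 0) * Ac i j + 0 * B i j = Ac i j
      ring
    rw [hCC0]
    exact hAcu0 i
  have hTne : T.Nonempty := ⟨0, h0T⟩
  have hTbdd : BddAbove T := ⟨1, fun t ht => ht.1.2⟩
  set t0 : ℝ := sSup T with ht0
  have ht0mem : t0 ∈ Set.Icc (0:ℝ) 1 :=
    ⟨le_csSup hTbdd h0T, csSup_le hTne (fun t ht => ht.1.2)⟩
  -- approach t0 by a sequence with witnesses
  obtain ⟨ts, hmono, htend, hmem⟩ := exists_seq_tendsto_sSup hTne hTbdd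
  have hwit : ∀ k, ∃ v, v ∈ stdSimplex ℝ (Fin n) ∧ ∀ i, 0 < (CC (ts k)).mulVec v i := by
    intro k
    obtain ⟨hIcc, u, hu, hCu⟩ := hmem k
    set σ : ℝ := ∑ i, u i with hσ
    have hσ0 : 0 < σ := Finset.sum_pos (fun i _ => hu i) Finset.univ_nonempty
    have hdiv : ∀ (M : Matrix (Fin n) (Fin n) ℝ) i,
        M.mulVec (fun j => u j / σ) i = (M.mulVec u i) / σ := by
      intro M i
      simp only [Matrix.mulVec, dotProduct, Finset.sum_div]
      exact Finset.sum_congr rfl fun j _ => by rw [mul_div_assoc]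
    refine ⟨fun j => u j / σ, ⟨fun j => le_of_lt (div_pos (hu j) hσ0), ?_⟩, fun i => ?_⟩
    · rw [← Finset.sum_div, ← hσ, div_self (ne_of_gt hσ0)]
    · rw [hdiv]
      exact div_pos (hCu i) hσ0
  choose vs hvs hvpos using hwit
  obtain ⟨v, hvmem, φ, hφ, hvtend⟩ := (isCompact_stdSimplex ℝ (ι := Fin n)).tendsto_subseq hvs
  have htsub : Filter.Tendsto (fun k => ts (φ k)) Filter.atTop (nhds t0) :=
    htend.comp hφ.tendsto_atTop
  have hvcomp : ∀ j, Filter.Tendsto (fun k => vs (φ k) j) Filter.atTop (nhds (v j)) := by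
    intro j
    have := hvtend
    rw [tendsto_pi_nhds] at this
    exact this j
  have hv0 : ∀ i, 0 ≤ v i := hvmem.1
  have hv1 : ∑ i, v i = 1 := hvmem.2
  have hCulim : ∀ i, 0 ≤ (CC t0).mulVec v i := by
    intro i
    have hlim : Filter.Tendsto (fun k => (CC (ts (φ k))).mulVec (vs (φ k)) i)
        Filter.atTop (nhds ((CC t0).mulVec v i)) := by
      simp only [Matrix.mulVec, dotProduct, hCC]
      apply tendsto_finset_sum
      intro j _
      exact (((tendsto_const_nhds.sub htsub).mul tendsto_const_nhds).add
        (htsub.mul tendsto_const_nhds)).mul (hvcomp j)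
    exact ge_of_tendsto' hlim (fun k => le_of_lt (hvpos (φ k) i))
  -- the support of v
  set C : Matrix (Fin n) (Fin n) ℝ := CC t0 with hCdef
  have hCmem : memInterval Al Au C := hCCmem t0 ht0mem
  have hCZ : ∀ i j, i ≠ j → C i j ≤ 0 := hCCZ t0 ht0mem
  have hCB : ∀ i j, B i j ≤ C i j := hBCC t0 ht0mem
  set I : Finset (Fin n) := Finset.univ.filter (fun i => 0 < v i) with hIdef
  have hvI : ∀ i ∈ I, 0 < v i := fun i hi => (Finset.mem_filter.1 hi).2
  have hInem : I.Nonempty := by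
    by_contra hc
    rw [Finset.not_nonempty_iff_eq_empty] at hc
    have hsum0 : ∑ i, v i = 0 := Finset.sum_eq_zero (fun i _ => by
      by_contra hvi
      have h1 : 0 < v i := lt_of_le_of_ne (hv0 i) (Ne.symm hvi)
      have h2 : i ∈ I := Finset.mem_filter.2 ⟨Finset.mem_univ i, h1⟩
      rw [hc] at h2
      exact absurd h2 (Finset.notMem_empty i))
    rw [hv1] at hsum0
    norm_num at hsum0
  have hvnotI : ∀ j, j ∉ I → v j = 0 := by
    intro j hj
    by_contra hvj
    exact hj (Finset.mem_filter.2 ⟨Finset.mem_univ j, lt_of_le_of_ne (hv0 j) (Ne.symm hvj)⟩)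
  have hrowI : ∀ i, C.mulVec v i = ∑ j ∈ I, C i j * v j := by
    intro i
    rw [Matrix.mulVec, dotProduct]
    exact (Finset.sum_subset (Finset.subset_univ I)
      (fun x _ hx => by rw [hvnotI x hx, mul_zero])).symm
  have hzero : ∀ i, i ∉ I → ∀ j ∈ I, C i j = 0 := by
    intro i hiI j hjI
    have h1 : 0 ≤ ∑ j ∈ I, C i j * v j := by
      rw [← hrowI]
      exact hCulim i
    have h2 : ∀ j ∈ I, C i j * v j ≤ 0 := by
      intro j hj
      have hij : i ≠ j := fun h => hiI (h ▸ hj)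
      exact mul_nonpos_of_nonpos_of_nonneg (hCZ i j hij) (hv0 j)
    have h4 : ∑ j ∈ I, C i j * v j = 0 :=
      le_antisymm (Finset.sum_nonpos h2) h1
    have h5 := (Finset.sum_eq_zero_iff_of_nonpos h2).1 h4 j hjI
    exact (mul_eq_zero.1 h5).resolve_right (ne_of_gt (hvI j hjI))
  -- Step 2: a strictly positive witness on I
  have hstep2 : ∃ wI : Fin n → ℝ, (∀ i ∈ I, 0 < wI i) ∧
      ∀ i ∈ I, 0 < ∑ j ∈ I, C i j * wI j := by
    set J : Finset (Fin n) := I.filter (fun i => ∑ j ∈ I, C i j * v j = 0) with hJdef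
    have hJI : J ⊆ I := Finset.filter_subset _ _
    have haI : ∀ i, 0 ≤ ∑ j ∈ I, C i j * v j := fun i => by
      rw [← hrowI]
      exact hCulim i
    have haJpos : ∀ i ∈ I, i ∉ J → 0 < ∑ j ∈ I, C i j * v j := by
      intro i hi hiJ
      rcases lt_or_eq_of_le (haI i) with h | h
      · exact h
      · exact absurd (Finset.mem_filter.2 ⟨hi, h.symm⟩) hiJ
    by_cases hJ : J = ∅
    · refine ⟨v, hvI, fun i hi => ?_⟩
      apply haJpos i hi
      rw [hJ]
      exact Finset.notMem_empty i
    · have hJne : J.Nonempty := Finset.nonempty_iff_ne_empty.2 hJ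
      have hdet := hreg C hCmem J hJne
      set D : Matrix (↥J) (↥J) ℝ := C.submatrix ((↑) : ↥J → Fin n) (↑) with hD
      set z : ↥J → ℝ := D⁻¹.mulVec (fun _ => 1) with hz
      have hDz : D.mulVec z = fun _ => 1 := by
        rw [hz, Matrix.mulVec_mulVec, Matrix.mul_nonsing_inv _ (isUnit_iff_ne_zero.2 hdet),
          Matrix.one_mulVec]
      set zh : Fin n → ℝ := fun x => if h : x ∈ J then z ⟨x, h⟩ else 0 with hzh
      have hbz : ∀ i, ∀ hi : i ∈ J, ∑ j ∈ I, C i j * zh j = 1 := by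
        intro i hi
        rw [← Finset.sum_subset hJI (fun x _ hx => by
          rw [hzh]
          dsimp only
          rw [dif_neg hx, mul_zero])]
        have h6 : ∑ j ∈ J, C i j * zh j = D.mulVec z ⟨i, hi⟩ := by
          rw [Matrix.mulVec, dotProduct,
            ← Finset.sum_coe_sort J (fun j => C i j * zh j)]
          apply Finset.sum_congr rfl
          intro j _
          rw [hzh]
          dsimp only
          rw [dif_pos j.2]
          rfl
        rw [h6, hDz]
      set a : Fin n → ℝ := fun i => ∑ j ∈ I, C i j * v j with ha
      set b : Fin n → ℝ := fun i => ∑ j ∈ I, C i j * zh j with hb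
      set f : Fin n → ℝ := fun i => min (v i / (|zh i| + 1))
        (if i ∈ J then 1 else a i / (|b i| + 1)) with hf
      have hfpos : ∀ i ∈ I, 0 < f i := by
        intro i hi
        apply lt_min
        · exact div_pos (hvI i hi) (by positivity)
        · split_ifs with h
          · norm_num
          · exact div_pos (haJpos i hi h) (by positivity)
      set ε : ℝ := (1/2) * I.inf' hInem f with hε
      have hε0 : 0 < ε := by
        rw [hε]
        have : 0 < I.inf' hInem f := (Finset.lt_inf'_iff hInem).2 (fun i hi => hfpos i hi)
        linarith
      have hεf : ∀ i ∈ I, ε ≤ f i / 2 := by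
        intro i hi
        rw [hε]
        have := Finset.inf'_le f hi
        linarith
      have hfle1 : ∀ i, f i ≤ v i / (|zh i| + 1) := fun i => min_le_left _ _
      have hfle2 : ∀ i, i ∉ J → f i ≤ a i / (|b i| + 1) := by
        intro i hiJ
        have h : f i ≤ if i ∈ J then (1:ℝ) else a i / (|b i| + 1) := min_le_right _ _
        rwa [if_neg hiJ] at h
      refine ⟨fun x => v x + ε * zh x, ?_, ?_⟩
      · intro i hi
        have h7 : ε ≤ v i / (|zh i| + 1) / 2 := le_trans (hεf i hi)
          (by linarith [hfle1 i])
        have h8 : ε * (|zh i| + 1) ≤ v i / 2 := by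
          rw [div_div] at h7
          calc ε * (|zh i| + 1) ≤ v i / ((|zh i| + 1) * 2) * (|zh i| + 1) :=
                mul_le_mul_of_nonneg_right h7 (by positivity)
            _ = v i / 2 := by field_simp
        have h9 : ε * zh i ≥ -(ε * |zh i|) := by
          have := neg_abs_le (zh i)
          nlinarith [hε0]
        have h10 : ε * |zh i| < v i := by nlinarith [hε0, hvI i hi, abs_nonneg (zh i)]
        dsimp only
        linarith
      · intro i hi
        have hexp : ∑ j ∈ I, C i j * (v j + ε * zh j) = a i + ε * b i := by
          rw [ha, hb]
          dsimp only
          rw [Finset.mul_sum, ← Finset.sum_add_distrib]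
          apply Finset.sum_congr rfl
          intro j _
          ring
        show 0 < ∑ j ∈ I, C i j * (v j + ε * zh j)
        rw [hexp]
        by_cases hiJ : i ∈ J
        · have hai : a i = 0 := (Finset.mem_filter.1 hiJ).2
          have hbi : b i = 1 := hbz i hiJ
          rw [hai, hbi]
          simpa using hε0
        · have hai : 0 < a i := haJpos i hi hiJ
          have h11 : ε ≤ a i / (|b i| + 1) / 2 :=
            le_trans (hεf i hi) (by linarith [hfle2 i hiJ])
          have h12 : ε * (|b i| + 1) ≤ a i / 2 := by
            rw [div_div] at h11
            calc ε * (|b i| + 1) ≤ a i / ((|b i| + 1) * 2) * (|b i| + 1) :=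
                  mul_le_mul_of_nonneg_right h11 (by positivity)
              _ = a i / 2 := by field_simp
          have h13 : ε * b i ≥ -(ε * |b i|) := by
            have := neg_abs_le (b i)
            nlinarith [hε0]
          nlinarith [abs_nonneg (b i), hε0]
  obtain ⟨wI, hwIpos, hwICI⟩ := hstep2
  have ht0T : t0 ∈ T := by
    by_cases hIuniv : I = Finset.univ
    · refine ⟨ht0mem, wI, fun i => hwIpos i (by rw [hIuniv]; exact Finset.mem_univ i),
        fun i => ?_⟩
      show 0 < C.mulVec wI i
      have h1 : C.mulVec wI i = ∑ j ∈ I, C i j * wI j := by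
        rw [hIuniv]
        rfl
      rw [h1]
      exact hwICI i (by rw [hIuniv]; exact Finset.mem_univ i)
    · -- recurse on the complement of I
      set Ic : Finset (Fin n) := Iᶜ with hIcdef
      set m : ℕ := Ic.card with hm
      have hmlt : m < n := by
        have h1 : Ic.card = Fintype.card (Fin n) - I.card := Finset.card_compl I
        have h2 : 0 < I.card := Finset.card_pos.2 hInem
        have h3 : I.card ≤ Fintype.card (Fin n) := Finset.card_le_univ I
        rw [hm, h1, Fintype.card_fin]
        rw [Fintype.card_fin] at h3
        omega
      have hcard : Fintype.card ↥Ic = m := Fintype.card_coe Ic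
      set e : Fin m ≃ ↥Ic := (Fintype.equivFinOfCardEq hcard).symm with he
      have hecoe : ∀ x (hx : x ∈ Ic), (↑(e (e.symm ⟨x, hx⟩)) : Fin n) = x := by
        intro x hx
        rw [Equiv.apply_symm_apply]
      set Al' : Matrix (Fin m) (Fin m) ℝ := fun i j => Al ↑(e i) ↑(e j) with hAl'
      set Au' : Matrix (Fin m) (Fin m) ℝ := fun i j => Au ↑(e i) ↑(e j) with hAu'
      have hle' : ∀ i j, Al' i j ≤ Au' i j := fun i j => hle _ _
      have hZ' : ∀ i j, i ≠ j → Al' i j + Au' i j ≤ 0 := by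
        intro i j hij
        exact hZ _ _ (fun hc => hij (e.injective (Subtype.coe_injective hc)))
      have hAc' : ∀ i j, (((1:ℝ)/2) • (Al' + Au')) i j = Ac ↑(e i) ↑(e j) := by
        intro i j
        rw [hAcApp]
        show (1:ℝ)/2 * (Al' i j + Au' i j)
          = 1/2 * (Al ↑(e i) ↑(e j) + Au ↑(e i) ↑(e j))
        rfl
      have hIcsum : ∀ (g : Fin n → ℝ), ∑ j : Fin m, g ↑(e j) = ∑ y ∈ Ic, g y := by
        intro g
        rw [← Finset.sum_coe_sort Ic g]
        exact Equiv.sum_comp e (fun y : ↥Ic => g ↑y)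
      have hdom' : ∃ u : Fin m → ℝ, (∀ i, 0 < u i) ∧
          ∀ i, 0 < (((1:ℝ)/2) • (Al' + Au')).mulVec u i := by
        refine ⟨fun i => u0 ↑(e i), fun i => hu0 _, fun i => ?_⟩
        have h1 : (((1:ℝ)/2) • (Al' + Au')).mulVec (fun j => u0 ↑(e j)) i
            = ∑ j : Fin m, Ac ↑(e i) ↑(e j) * u0 ↑(e j) := by
          rw [Matrix.mulVec, dotProduct]
          exact Finset.sum_congr rfl fun j _ => by rw [hAc']
        rw [h1, hIcsum (fun y => Ac ↑(e i) y * u0 y)]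
        have h2 : Ac.mulVec u0 ↑(e i) = ∑ y ∈ Ic, Ac ↑(e i) y * u0 y
            + ∑ y ∈ Icᶜ, Ac ↑(e i) y * u0 y := by
          rw [Matrix.mulVec, dotProduct]
          exact (Finset.sum_add_sum_compl Ic _).symm
        have h3 : ∑ y ∈ Icᶜ, Ac ↑(e i) y * u0 y ≤ 0 := by
          apply Finset.sum_nonpos
          intro y hy
          have hne : (↑(e i) : Fin n) ≠ y := by
            intro hc
            have h4 : (↑(e i) : Fin n) ∈ Ic := (e i).2
            rw [hc] at h4
            exact absurd h4 (Finset.mem_compl.1 hy)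
          exact mul_nonpos_of_nonpos_of_nonneg (hAcOff _ _ hne) (le_of_lt (hu0 y))
        have h4 := hAcu0 ↑(e i)
        linarith
      have hreg' : ∀ A', memInterval Al' Au' A' → PrincipallyNondegenerate A' := by
        intro A' hA' K hK
        set Abig : Matrix (Fin n) (Fin n) ℝ := fun x y =>
          if h : x ∈ Ic ∧ y ∈ Ic then A' (e.symm ⟨x, h.1⟩) (e.symm ⟨y, h.2⟩) else Ac x y
          with hAbig
        have hAbigmem : memInterval Al Au Abig := by
          intro x y
          rw [hAbig]
          dsimp only
          split_ifs with h
          · have hx : (↑(e (e.symm ⟨x, h.1⟩)) : Fin n) = x := hecoe x h.1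
            have hy : (↑(e (e.symm ⟨y, h.2⟩)) : Fin n) = y := hecoe y h.2
            have h5 : Al ↑(e (e.symm ⟨x, h.1⟩)) ↑(e (e.symm ⟨y, h.2⟩))
                  ≤ A' (e.symm ⟨x, h.1⟩) (e.symm ⟨y, h.2⟩)
                ∧ A' (e.symm ⟨x, h.1⟩) (e.symm ⟨y, h.2⟩)
                  ≤ Au ↑(e (e.symm ⟨x, h.1⟩)) ↑(e (e.symm ⟨y, h.2⟩)) := hA' _ _
            rw [hx, hy] at h5
            exact h5
          · exact ⟨hAlAc x y, hAcAu x y⟩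
        set K' : Finset (Fin n) := K.image (fun k => ↑(e k)) with hK'
        have hK'ne : K'.Nonempty := hK.image _
        have hdetK' := hreg Abig hAbigmem K' hK'ne
        have hinj : Function.Injective (fun k : Fin m => (↑(e k) : Fin n)) :=
          fun a b hab => e.injective (Subtype.coe_injective hab)
        have hmemK' : ∀ k : ↥K, (↑(e ↑k) : Fin n) ∈ K' := fun k =>
          Finset.mem_image_of_mem _ k.2
        have hψbij : Function.Bijective (fun k : ↥K => (⟨↑(e ↑k), hmemK' k⟩ : ↥K')) := by
          constructor
          · intro a b hab
            have h6 := congrArg Subtype.val hab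
            exact Subtype.ext (hinj h6)
          · intro y
            obtain ⟨k, hk, hky⟩ := Finset.mem_image.1 y.2
            exact ⟨⟨k, hk⟩, Subtype.ext hky⟩
        set ψe : ↥K ≃ ↥K' := Equiv.ofBijective _ hψbij with hψe
        have hsub : A'.submatrix ((↑) : ↥K → Fin m) (↑)
            = (Abig.submatrix ((↑) : ↥K' → Fin n) (↑)).submatrix ψe ψe := by
          ext k l
          show A' ↑k ↑l = Abig ↑(ψe k) ↑(ψe l)
          have h6 : (↑(ψe k) : Fin n) = ↑(e ↑k) := rfl
          have h7 : (↑(ψe l) : Fin n) = ↑(e ↑l) := rfl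
          rw [h6, h7, hAbig]
          dsimp only
          rw [dif_pos ⟨(e ↑k).2, (e ↑l).2⟩]
          have h8 : e.symm ⟨↑(e ↑k), (e ↑k).2⟩ = (↑k : Fin m) := by
            rw [show (⟨↑(e ↑k), (e ↑k).2⟩ : ↥Ic) = e ↑k from rfl, Equiv.symm_apply_apply]
          have h9 : e.symm ⟨↑(e ↑l), (e ↑l).2⟩ = (↑l : Fin m) := by
            rw [show (⟨↑(e ↑l), (e ↑l).2⟩ : ↥Ic) = e ↑l from rfl, Equiv.symm_apply_apply]
          rw [h8, h9]
        show (A'.submatrix ((↑) : ↥K → Fin m) (↑)).det ≠ 0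
        rw [hsub, Matrix.det_submatrix_equiv_self]
        exact hdetK'
      obtain ⟨w', hw'pos, hBw'⟩ := IH m hmlt Al' Au' hle' hZ' hdom' hreg'
      have hBmat' : ∀ (i j : Fin m), Bmat Al' i j = B ↑(e i) ↑(e j) := by
        intro i j
        rw [hBdef]
        by_cases hc : i = j
        · subst hc
          show (if i = i then max 0 (Al' i i) else Al' i i)
              = (if (↑(e i) : Fin n) = ↑(e i) then max 0 (Al ↑(e i) ↑(e i))
                 else Al ↑(e i) ↑(e i))
          rw [if_pos rfl, if_pos rfl]
        · have hc2 : (↑(e i) : Fin n) ≠ ↑(e j) :=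
            fun h => hc (e.injective (Subtype.coe_injective h))
          show (if i = j then max 0 (Al' i i) else Al' i j)
              = (if (↑(e i) : Fin n) = ↑(e j) then max 0 (Al ↑(e i) ↑(e i))
                 else Al ↑(e i) ↑(e j))
          rw [if_neg hc, if_neg hc2]
      set w2 : Fin n → ℝ := fun x => if h : x ∈ Ic then w' (e.symm ⟨x, h⟩) else 0 with hw2
      have hw2pos : ∀ x, x ∈ Ic → 0 < w2 x := by
        intro x hx
        have h : w2 x = w' (e.symm ⟨x, hx⟩) := by
          rw [hw2]
          exact dif_pos hx
        rw [h]
        exact hw'pos _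
      have hBw2 : ∀ x, ∀ hx : x ∈ Ic, 0 < ∑ y ∈ Ic, B x y * w2 y := by
        intro x hx
        have h1 : ∑ y ∈ Ic, B x y * w2 y
            = ∑ j : Fin m, Bmat Al' (e.symm ⟨x, hx⟩) j * w' j := by
          rw [← hIcsum (fun y => B x y * w2 y)]
          apply Finset.sum_congr rfl
          intro j _
          have hw2j : w2 ↑(e j) = w' j := by
            have heq : (e.symm ⟨↑(e j), (e j).2⟩ : Fin m) = j := by
              rw [show (⟨↑(e j), (e j).2⟩ : ↥Ic) = e j from rfl, Equiv.symm_apply_apply]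
            rw [hw2]
            exact (dif_pos (e j).2).trans (congrArg w' heq)
          rw [hw2j, hBmat' (e.symm ⟨x, hx⟩) j, hecoe x hx]
        have h2 : (Bmat Al').mulVec w' (e.symm ⟨x, hx⟩)
            = ∑ j : Fin m, Bmat Al' (e.symm ⟨x, hx⟩) j * w' j := rfl
        rw [h1, ← h2]
        exact hBw' _
      have hCw2 : ∀ x, x ∈ Ic → 0 < ∑ y ∈ Ic, C x y * w2 y := by
        intro x hx
        have h1 : ∑ y ∈ Ic, B x y * w2 y ≤ ∑ y ∈ Ic, C x y * w2 y :=
          Finset.sum_le_sum fun y hy =>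
            mul_le_mul_of_nonneg_right (hCB x y) (le_of_lt (hw2pos y hy))
        linarith [hBw2 x hx]
      set P : Fin n → ℝ := fun i => ∑ j ∈ I, C i j * wI j with hP
      set Q : Fin n → ℝ := fun i => ∑ j ∈ Ic, C i j * w2 j with hQ
      set Mc : ℝ := 1 + I.sup' hInem (fun i => |Q i| / P i) with hMc
      have hMc1 : 1 ≤ Mc := by
        rw [hMc]
        have h1 : 0 ≤ |Q hInem.choose| / P hInem.choose :=
          div_nonneg (abs_nonneg _) (le_of_lt (hwICI _ hInem.choose_spec))
        have h2 : |Q hInem.choose| / P hInem.choose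
            ≤ I.sup' hInem (fun i => |Q i| / P i) :=
          Finset.le_sup' (f := fun i => |Q i| / P i) hInem.choose_spec
        linarith
      set w : Fin n → ℝ := fun x => if x ∈ I then Mc * wI x else w2 x with hwdef
      have hwpos : ∀ x, 0 < w x := by
        intro x
        by_cases h : x ∈ I
        · have hx : w x = Mc * wI x := by
            rw [hwdef]
            exact if_pos h
          rw [hx]
          exact mul_pos (by linarith) (hwIpos x h)
        · have hx : w x = w2 x := by
            rw [hwdef]
            exact if_neg h
          rw [hx]
          exact hw2pos x (Finset.mem_compl.2 h)
      refine ⟨ht0mem, w, hwpos, fun i => ?_⟩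
      show 0 < C.mulVec w i
      have hsplit : C.mulVec w i = Mc * P i + Q i := by
        rw [Matrix.mulVec, dotProduct,
          ← Finset.sum_add_sum_compl I (fun j => C i j * w j)]
        congr 1
        · rw [hP, Finset.mul_sum]
          apply Finset.sum_congr rfl
          intro j hj
          have hx : w j = Mc * wI j := by
            rw [hwdef]
            exact if_pos hj
          rw [hx]
          ring
        · rw [hQ]
          apply Finset.sum_congr rfl
          intro j hj
          have hx : w j = w2 j := by
            rw [hwdef]
            exact if_neg (Finset.mem_compl.1 hj)
          rw [hx]
      rw [hsplit]
      by_cases hi : i ∈ I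
      · have hPi : 0 < P i := hwICI i hi
        have h6 : |Q i| / P i ≤ I.sup' hInem (fun i => |Q i| / P i) :=
          Finset.le_sup' (f := fun i => |Q i| / P i) hi
        have h7 : |Q i| / P i ≤ Mc - 1 := by
          rw [hMc]
          linarith
        have h8 : |Q i| ≤ (Mc - 1) * P i := by
          rw [div_le_iff₀ hPi] at h7
          linarith
        linarith [neg_abs_le (Q i)]
      · have hPi : P i = 0 := Finset.sum_eq_zero fun j hj => by
          rw [hzero i hi j hj, zero_mul]
        rw [hPi, mul_zero, zero_add]
        exact hCw2 i (Finset.mem_compl.2 hi)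
  -- openness of T at t0 forces t0 = 1
  have ht01 : t0 = 1 := by
    by_contra hne1
    have ht0lt : t0 < 1 := lt_of_le_of_ne ht0mem.2 hne1
    obtain ⟨-, w, hwpos, hCw⟩ := ht0T
    set d : Fin n → ℝ := fun i => ∑ j, (B i j - Ac i j) * w j with hd
    have hCt : ∀ t i, (CC t).mulVec w i = (CC t0).mulVec w i + (t - t0) * d i := by
      intro t i
      rw [hd]
      show ∑ j, ((1 - t) * Ac i j + t * B i j) * w j
        = (∑ j, ((1 - t0) * Ac i j + t0 * B i j) * w j)
          + (t - t0) * ∑ j, (B i j - Ac i j) * w j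
      rw [Finset.mul_sum, ← Finset.sum_add_distrib]
      apply Finset.sum_congr rfl
      intro j _
      ring
    set η : ℝ := Finset.univ.inf' Finset.univ_nonempty
      (fun i => ((CC t0).mulVec w i) / (|d i| + 1)) with hη
    have hη0 : 0 < η :=
      (Finset.lt_inf'_iff _).2 fun i _ => div_pos (hCw i) (by positivity)
    set t1 : ℝ := min 1 (t0 + η / 2) with ht1def
    have ht1gt : t0 < t1 := lt_min ht0lt (by linarith)
    have ht1mem : t1 ∈ Set.Icc (0:ℝ) 1 :=
      ⟨le_trans ht0mem.1 (le_of_lt ht1gt), min_le_left _ _⟩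
    have ht1T : t1 ∈ T := by
      refine ⟨ht1mem, w, hwpos, fun i => ?_⟩
      rw [hCt t1 i]
      have h8 : t1 - t0 ≤ η / 2 := by
        have h := min_le_right 1 (t0 + η / 2)
        rw [← ht1def] at h
        linarith
      have h9 : 0 ≤ t1 - t0 := le_of_lt (sub_pos.2 ht1gt)
      have h10 : η ≤ ((CC t0).mulVec w i) / (|d i| + 1) :=
        Finset.inf'_le _ (Finset.mem_univ i)
      have h11 : η * (|d i| + 1) ≤ (CC t0).mulVec w i := by
        rw [le_div_iff₀ (by positivity)] at h10
        linarith
      have habs : |(t1 - t0) * d i| ≤ (η / 2) * |d i| := by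
        rw [abs_mul, abs_of_nonneg h9]
        exact mul_le_mul_of_nonneg_right h8 (abs_nonneg _)
      have h12 := neg_abs_le ((t1 - t0) * d i)
      nlinarith [abs_nonneg (d i), hη0, h11, habs, h12]
    have h13 := le_csSup hTbdd ht1T
    rw [← ht0] at h13
    linarith
  obtain ⟨-, w, hwpos, hCw⟩ := ht0T
  refine ⟨w, hwpos, fun i => ?_⟩
  have hCCB : CC t0 = B := by
    funext i j
    rw [ht01]
    show (1 - 1) * Ac i j + 1 * B i j = B i j
    ring
  have h14 := hCw i
  rw [hCCB] at h14
  exact h14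

theorem stmt_8 {n : ℕ} (Al Au : Matrix (Fin n) (Fin n) ℝ)
    (hle : ∀ i j, Al i j ≤ Au i j)
    (Ac : Matrix (Fin n) (Fin n) ℝ) (hAc : Ac = (1/2 : ℝ) • (Al + Au)) (hM : IsMMatrix Ac) :
    (∀ A : Matrix (Fin n) (Fin n) ℝ, memInterval Al Au A → PrincipallyNondegenerate A) ↔ (∀ A : Matrix (Fin n) (Fin n) ℝ, memInterval Al Au A → IsHMatrix A) := by
  constructor
  · intro hnd A hA
    obtain ⟨s, N, hNnn, hAceq, hslt⟩ := hM
    have hZ : ∀ i j, i ≠ j → Ac i j ≤ 0 := by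
      intro i j hij
      rw [hAceq]
      simp only [Matrix.sub_apply, Matrix.smul_apply, Matrix.one_apply_ne hij,
        smul_eq_mul, mul_zero]
      linarith [hNnn i j]
    have hZ' : ∀ i j, i ≠ j → Al i j + Au i j ≤ 0 := by
      intro i j hij
      have := hZ i j hij
      rw [hAc] at this
      simp only [Matrix.smul_apply, Matrix.add_apply, smul_eq_mul] at this
      linarith
    obtain ⟨u0, hu0, hAcu0⟩ := dom_of_isMMatrix Ac ⟨s, N, hNnn, hAceq, hslt⟩
    have hdomm : ∃ u : Fin n → ℝ, (∀ i, 0 < u i) ∧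
        ∀ i, 0 < (((1:ℝ)/2) • (Al + Au)).mulVec u i := by
      refine ⟨u0, hu0, fun i => ?_⟩
      rw [← hAc]
      exact hAcu0 i
    obtain ⟨w, hw, hBw⟩ := mainB n Al Au hle hZ' hdomm hnd
    have hcomp : ∀ i j, Bmat Al i j ≤ compMatrix A i j := by
      intro i j
      by_cases h : i = j
      · subst h
        simp only [Bmat, compMatrix, if_pos rfl]
        exact max_le (abs_nonneg _) ((hA i i).1.trans (le_abs_self _))
      · simp only [Bmat, compMatrix, if_neg h]
        have h1 : A i j ≤ -Al i j := (hA i j).2.trans (by linarith [hZ' i j h])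
        have h2 : -A i j ≤ -Al i j := by linarith [(hA i j).1]
        have : |A i j| ≤ -Al i j := abs_le.2 ⟨by linarith, h1⟩
        linarith
    refine isMMatrix_of_dom (compMatrix A) ?_ w hw ?_
    · intro i j hij
      simp only [compMatrix, if_neg (fun hh : i = j => hij hh)]
      exact neg_nonpos.2 (abs_nonneg _)
    · intro i
      exact lt_of_lt_of_le (hBw i)
        (mulVec_mono _ _ hcomp w (fun j => le_of_lt (hw j)) i)
  · intro hH A hA
    exact principallyNondegenerate_of_isHMatrix A (hH A hA)
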